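/- For every Δ > 2 and every 2 ≤ ℓ ≤ 2Δ-2, there exists a finite graph H satisfying property Δ-(*) with chromatic number exactly ℓ. -/

import Mathlib

/-- Property Δ-(*): there exist sets `R0, R1 ⊆ V(G)` with no edge between them such that
the induced subgraph on the complement of each `Ri` is `(Δ-1)`-colorable. -/
def PropertyStar {V : Type*} (G : SimpleGraph V) (Δ : ℕ) : Prop :=
  ∃ R0 R1 : Set V,
    (∀ a ∈ R0, ∀ b ∈ R1, ¬ G.Adj a b) ∧
    (G.induce R0ᶜ).Colorable (Δ - 1) ∧
    (G.induce R1ᶜ).Colorable (Δ - 1)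

namespace StarAux

open SimpleGraph Sum

/-! ### The cone operation (join with one apex) -/

/-- Cone over a graph: a new apex (`none`) adjacent to every old vertex. -/
def cone {V : Type} (G : SimpleGraph V) : SimpleGraph (Option V) where
  Adj x y :=
    match x, y with
    | some u, some v => G.Adj u v
    | some _, none => True
    | none, some _ => True
    | none, none => False
  symm := by
    refine ⟨?_⟩
    rintro (_ | u) (_ | v) h <;> simp_all
    exact h.symm
  loopless := by
    refine ⟨?_⟩
    rintro (_ | u) h <;> simp_all

@[simp] lemma cone_adj_some_some {V : Type} (G : SimpleGraph V) (u v : V) :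
    (cone G).Adj (some u) (some v) ↔ G.Adj u v := Iff.rfl

@[simp] lemma cone_adj_none_some {V : Type} (G : SimpleGraph V) (v : V) :
    (cone G).Adj none (some v) := trivial

@[simp] lemma cone_adj_some_none {V : Type} (G : SimpleGraph V) (v : V) :
    (cone G).Adj (some v) none := trivial

/-! ### The Mycielski operation -/

/-- Mycielskian of a graph. `some (inl v)` are the original vertices, `some (inr v)` are
the mirror vertices, `none` is the apex. -/
def myc {V : Type} (G : SimpleGraph V) : SimpleGraph (Option (V ⊕ V)) where
  Adj x y :=
    match x, y with
    | some (inl u), some (inl v) => G.Adj u v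
    | some (inl u), some (inr v) => G.Adj u v
    | some (inr u), some (inl v) => G.Adj u v
    | some (inr _), some (inr _) => False
    | none, some (inr _) => True
    | some (inr _), none => True
    | none, some (inl _) => False
    | some (inl _), none => False
    | none, none => False
  symm := by
    refine ⟨?_⟩
    rintro (_ | (u | u)) (_ | (v | v)) h <;> simp_all <;> exact h.symm
  loopless := by
    refine ⟨?_⟩
    rintro (_ | (u | u)) h <;> simp_all

variable {V : Type} {G : SimpleGraph V}

@[simp] lemma myc_adj_ll (u v : V) :
    (myc G).Adj (some (inl u)) (some (inl v)) ↔ G.Adj u v := Iff.rfl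
@[simp] lemma myc_adj_lr (u v : V) :
    (myc G).Adj (some (inl u)) (some (inr v)) ↔ G.Adj u v := Iff.rfl
@[simp] lemma myc_adj_rl (u v : V) :
    (myc G).Adj (some (inr u)) (some (inl v)) ↔ G.Adj u v := Iff.rfl
@[simp] lemma myc_adj_rr (u v : V) :
    ¬ (myc G).Adj (some (inr u)) (some (inr v)) := fun h => h
@[simp] lemma myc_adj_none_r (v : V) :
    (myc G).Adj none (some (inr v)) := trivial
@[simp] lemma myc_adj_none_l (v : V) :
    ¬ (myc G).Adj none (some (inl v)) := fun h => h
@[simp] lemma myc_adj_l_none (v : V) :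
    ¬ (myc G).Adj (some (inl v)) none := fun h => h
@[simp] lemma myc_adj_r_none (v : V) :
    (myc G).Adj (some (inr v)) none := trivial

/-! ### Chromatic facts for cone -/

lemma cone_colorable (n : ℕ) (h : G.Colorable n) : (cone G).Colorable (n + 1) := by
  obtain ⟨C⟩ := h
  refine ⟨Coloring.mk (fun x => Option.rec (Fin.last n) (fun v => (C v).castSucc) x) ?_⟩
  rintro (_ | u) (_ | v) hadj
  · exact absurd hadj ((cone G).loopless.irrefl none)
  · exact fun h' => absurd h'.symm (Fin.castSucc_lt_last (C v)).ne
  · exact fun h' => absurd h' (Fin.castSucc_lt_last (C u)).ne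
  · simpa [Fin.castSucc_inj] using C.valid hadj

lemma card_ne_color {n : ℕ} (γ : Fin (n + 1)) :
    Fintype.card {x : Fin (n + 1) // ¬ x = γ} = n := by
  rw [Fintype.card_subtype_compl, Fintype.card_subtype_eq, Fintype.card_fin]
  omega

lemma cone_lower (n : ℕ) (h : (cone G).Colorable (n + 1)) : G.Colorable n := by
  obtain ⟨C⟩ := h
  set γ := C none with hγ
  have hne : ∀ v : V, ¬ C (some v) = γ := fun v h' =>
    (C.valid (cone_adj_none_some G v)).symm h'
  let D : G.Coloring {x : Fin (n + 1) // ¬ x = γ} :=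
    Coloring.mk (fun v => ⟨C (some v), hne v⟩) (by
      intro u v huv
      simp only [Subtype.mk.injEq, ne_eq]
      exact C.valid ((cone_adj_some_some G u v).mpr huv))
  have := D.colorable
  rwa [card_ne_color] at this

/-! ### Chromatic facts for the Mycielskian -/

lemma myc_colorable (n : ℕ) (h : G.Colorable n) : (myc G).Colorable (n + 1) := by
  obtain ⟨C⟩ := h
  refine ⟨Coloring.mk
    (fun x => Option.rec (Fin.last n)
      (fun s => Sum.rec (fun v => (C v).castSucc) (fun v => (C v).castSucc) s) x) ?_⟩
  rintro (_ | (u | u)) (_ | (v | v)) hadj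
  · exact absurd hadj ((myc G).loopless.irrefl none)
  · exact absurd hadj (myc_adj_none_l (G := G) v)
  · exact fun h' => absurd h'.symm (Fin.castSucc_lt_last _).ne
  · exact absurd hadj (myc_adj_l_none (G := G) u)
  · simpa [Fin.castSucc_inj] using C.valid hadj
  · simpa [Fin.castSucc_inj] using C.valid hadj
  · exact fun h' => absurd h' (Fin.castSucc_lt_last _).ne
  · simpa [Fin.castSucc_inj] using C.valid hadj
  · exact absurd hadj (myc_adj_rr (G := G) u v)

lemma myc_lower (n : ℕ) (h : (myc G).Colorable (n + 1)) : G.Colorable n := by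
  obtain ⟨C⟩ := h
  set γ := C none with hγ
  classical
  let c' : V → Fin (n + 1) := fun v =>
    if C (some (inl v)) = γ then C (some (inr v)) else C (some (inl v))
  have hne : ∀ v, ¬ c' v = γ := by
    intro v
    by_cases hv : C (some (inl v)) = γ
    · simpa [c', hv] using fun h' => (C.valid (myc_adj_none_r v)).symm h'
    · simpa [c', hv] using hv
  have hproper : ∀ {u v}, G.Adj u v → c' u ≠ c' v := by
    intro u v huv
    by_cases hu : C (some (inl u)) = γ <;> by_cases hv : C (some (inl v)) = γ
    · exact absurd (hu.trans hv.symm) (C.valid ((myc_adj_ll u v).mpr huv))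
    · simpa [c', hu, hv] using C.valid ((myc_adj_rl u v).mpr huv)
    · simpa [c', hu, hv] using C.valid ((myc_adj_lr u v).mpr huv)
    · simpa [c', hu, hv] using C.valid ((myc_adj_ll u v).mpr huv)
  let D : G.Coloring {x : Fin (n + 1) // ¬ x = γ} :=
    Coloring.mk (fun v => ⟨c' v, hne v⟩) (by
      intro u v huv
      simpa [Subtype.mk.injEq, ne_eq] using hproper huv)
  have := D.colorable
  rwa [card_ne_color] at this

/-! ### Lifted removal sets -/

/-- Lift of a removal set to the cone. -/
def coneLift (R : Set V) : Set (Option V) := some '' R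

/-- The "pay" lift: the set is unchanged (kept inside the base copy). -/
def payLift (R : Set V) : Set (Option (V ⊕ V)) := some '' (inl '' R)

/-- The "dodge" lift: the set together with its mirrors and the apex. -/
def dodgeLift (R : Set V) : Set (Option (V ⊕ V)) :=
  insert none (some '' (inl '' R ∪ inr '' R))

lemma mem_coneLift {R : Set V} {x : Option V} :
    x ∈ coneLift R ↔ ∃ v ∈ R, x = some v := by
  simp [coneLift, Set.mem_image, eq_comm]

lemma mem_payLift {R : Set V} {x : Option (V ⊕ V)} :
    x ∈ payLift R ↔ ∃ v ∈ R, x = some (inl v) := by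
  simp [payLift, Set.mem_image, eq_comm]

lemma mem_dodgeLift {R : Set V} {x : Option (V ⊕ V)} :
    x ∈ dodgeLift R ↔ x = none ∨ (∃ v ∈ R, x = some (inl v)) ∨ ∃ v ∈ R, x = some (inr v) := by
  simp [dodgeLift, Set.mem_image, eq_comm]

/-! ### Induced-complement colorability lemmas -/

lemma cone_induce_colorable {R : Set V} {b : ℕ} (h : (G.induce Rᶜ).Colorable b) :
    ((cone G).induce (coneLift R)ᶜ).Colorable (b + 1) := by
  classical
  obtain ⟨C⟩ := h
  let f : Option V → Fin (b + 1) := fun x =>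
    match x with
    | none => Fin.last b
    | some v => if hv : v ∈ R then 0 else (C ⟨v, hv⟩).castSucc
  refine ⟨Coloring.mk (fun x => f x.val) ?_⟩
  rintro ⟨(_ | u), hu⟩ ⟨(_ | v), hv⟩ hadj
  · exact absurd hadj (((cone G).induce _).loopless.irrefl _)
  · have hvR : v ∉ R := fun hr => hv (mem_coneLift.mpr ⟨v, hr, rfl⟩)
    simp only [f, dif_neg hvR]
    exact fun h' => absurd h'.symm (Fin.castSucc_lt_last _).ne
  · have huR : u ∉ R := fun hr => hu (mem_coneLift.mpr ⟨u, hr, rfl⟩)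
    simp only [f, dif_neg huR]
    exact fun h' => absurd h' (Fin.castSucc_lt_last _).ne
  · have huR : u ∉ R := fun hr => hu (mem_coneLift.mpr ⟨u, hr, rfl⟩)
    have hvR : v ∉ R := fun hr => hv (mem_coneLift.mpr ⟨v, hr, rfl⟩)
    have : G.Adj u v := hadj
    simp only [f, dif_neg huR, dif_neg hvR]
    simpa [Fin.castSucc_inj] using C.valid (by exact this : (G.induce Rᶜ).Adj ⟨u, huR⟩ ⟨v, hvR⟩)

lemma pay_induce_colorable {R : Set V} {b : ℕ} (hb : 1 ≤ b)
    (h : (G.induce Rᶜ).Colorable b) :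
    ((myc G).induce (payLift R)ᶜ).Colorable (b + 1) := by
  classical
  obtain ⟨C⟩ := h
  let f : Option (V ⊕ V) → Fin (b + 1) := fun x =>
    match x with
    | none => ⟨0, Nat.succ_pos b⟩
    | some (inl v) => if hv : v ∈ R then 0 else (C ⟨v, hv⟩).castSucc
    | some (inr _) => Fin.last b
  have hlast0 : (Fin.last b) ≠ (⟨0, Nat.succ_pos b⟩ : Fin (b + 1)) := by
    intro h'
    have := congrArg Fin.val h'
    simp at this
    omega
  refine ⟨Coloring.mk (fun x => f x.val) ?_⟩
  rintro ⟨(_ | (u | u)), hu⟩ ⟨(_ | (v | v)), hv⟩ hadj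
  · exact absurd hadj (((myc G).induce _).loopless.irrefl _)
  · exact absurd (hadj : (myc G).Adj none (some (inl v))) (myc_adj_none_l (G := G) v)
  · exact fun h' => hlast0 h'.symm
  · exact absurd (hadj : (myc G).Adj (some (inl u)) none) (myc_adj_l_none (G := G) u)
  · have huR : u ∉ R := fun hr => hu (mem_payLift.mpr ⟨u, hr, rfl⟩)
    have hvR : v ∉ R := fun hr => hv (mem_payLift.mpr ⟨v, hr, rfl⟩)
    have hGa : G.Adj u v := hadj
    simp only [f, dif_neg huR, dif_neg hvR]
    simpa [Fin.castSucc_inj] using C.valid (by exact hGa : (G.induce Rᶜ).Adj ⟨u, huR⟩ ⟨v, hvR⟩)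
  · have huR : u ∉ R := fun hr => hu (mem_payLift.mpr ⟨u, hr, rfl⟩)
    simp only [f, dif_neg huR]
    exact fun h' => absurd h' (Fin.castSucc_lt_last _).ne
  · exact fun h' => hlast0 h'
  · have hvR : v ∉ R := fun hr => hv (mem_payLift.mpr ⟨v, hr, rfl⟩)
    simp only [f, dif_neg hvR]
    exact fun h' => absurd h'.symm (Fin.castSucc_lt_last _).ne
  · exact absurd hadj (myc_adj_rr (G := G) u v)

lemma dodge_induce_colorable {R : Set V} {b : ℕ}
    (h : (G.induce Rᶜ).Colorable b) :
    ((myc G).induce (dodgeLift R)ᶜ).Colorable b := by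
  classical
  obtain ⟨C⟩ := h
  let g : {x // x ∈ (dodgeLift R)ᶜ} → Fin b := fun x =>
    match x with
    | ⟨none, hx⟩ => (hx (mem_dodgeLift.mpr (Or.inl rfl))).elim
    | ⟨some (inl v), hx⟩ =>
        C ⟨v, fun hr => hx (mem_dodgeLift.mpr (Or.inr (Or.inl ⟨v, hr, rfl⟩)))⟩
    | ⟨some (inr v), hx⟩ =>
        C ⟨v, fun hr => hx (mem_dodgeLift.mpr (Or.inr (Or.inr ⟨v, hr, rfl⟩)))⟩
  refine ⟨Coloring.mk g ?_⟩
  rintro ⟨(_ | (u | u)), hu⟩ ⟨(_ | (v | v)), hv⟩ hadj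
  · exact absurd hadj (((myc G).induce _).loopless.irrefl _)
  · exact absurd (mem_dodgeLift.mpr (Or.inl rfl)) hu
  · exact absurd (mem_dodgeLift.mpr (Or.inl rfl)) hu
  · exact absurd (mem_dodgeLift.mpr (Or.inl rfl)) hv
  · exact C.valid (by exact (hadj : G.Adj u v) :
      (G.induce Rᶜ).Adj ⟨u, _⟩ ⟨v, _⟩)
  · exact C.valid (by exact (hadj : G.Adj u v) :
      (G.induce Rᶜ).Adj ⟨u, _⟩ ⟨v, _⟩)
  · exact absurd (mem_dodgeLift.mpr (Or.inl rfl)) hv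
  · exact C.valid (by exact (hadj : G.Adj u v) :
      (G.induce Rᶜ).Adj ⟨u, _⟩ ⟨v, _⟩)
  · exact absurd hadj (myc_adj_rr (G := G) u v)

/-! ### Non-adjacency lemmas -/

lemma cone_nonadj {R0 R1 : Set V} (h : ∀ x ∈ R0, ∀ y ∈ R1, ¬ G.Adj x y) :
    ∀ x ∈ coneLift R0, ∀ y ∈ coneLift R1, ¬ (cone G).Adj x y := by
  intro x hx y hy
  obtain ⟨u, hu, rfl⟩ := mem_coneLift.mp hx
  obtain ⟨v, hv, rfl⟩ := mem_coneLift.mp hy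
  exact h u hu v hv

lemma myc_nonadj {R0 R1 : Set V} (h : ∀ x ∈ R0, ∀ y ∈ R1, ¬ G.Adj x y) :
    ∀ x ∈ dodgeLift R0, ∀ y ∈ payLift R1, ¬ (myc G).Adj x y := by
  intro x hx y hy
  obtain ⟨v, hv, rfl⟩ := mem_payLift.mp hy
  rcases mem_dodgeLift.mp hx with rfl | ⟨u, hu, rfl⟩ | ⟨u, hu, rfl⟩
  · exact myc_adj_none_l (G := G) v
  · exact fun hadj => h u hu v hv hadj
  · exact fun hadj => h u hu v hv hadj

/-! ### The `Good` predicate and step lemmas -/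

/-- `Good a b n` : there is a finite graph with chromatic number exactly `n+1`, having two
mutually non-adjacent sets whose removals leave an `a`-colorable resp. `b`-colorable graph. -/
def Good (a b n : ℕ) : Prop :=
  ∃ (W : Type) (_ : Fintype W) (G : SimpleGraph W) (R0 R1 : Set W),
    (∀ x ∈ R0, ∀ y ∈ R1, ¬ G.Adj x y) ∧
    (G.induce R0ᶜ).Colorable a ∧
    (G.induce R1ᶜ).Colorable b ∧
    G.Colorable (n + 1) ∧ ¬ G.Colorable n

lemma Good.swap {a b n : ℕ} (h : Good a b n) : Good b a n := by
  obtain ⟨W, hW, G, R0, R1, hna, h0, h1, hc, hn⟩ := h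
  exact ⟨W, hW, G, R1, R0, fun x hx y hy hadj => hna y hy x hx hadj.symm, h1, h0, hc, hn⟩

lemma Good.mono {a b n a' b' : ℕ} (h : Good a b n) (ha : a ≤ a') (hb : b ≤ b') :
    Good a' b' n := by
  obtain ⟨W, hW, G, R0, R1, hna, h0, h1, hc, hn⟩ := h
  exact ⟨W, hW, G, R0, R1, hna, h0.mono ha, h1.mono hb, hc, hn⟩

lemma Good.cone {a b n : ℕ} (h : Good a b n) : Good (a + 1) (b + 1) (n + 1) := by
  obtain ⟨W, hW, G, R0, R1, hna, h0, h1, hc, hn⟩ := h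
  letI := hW
  refine ⟨Option W, inferInstance, StarAux.cone G, coneLift R0, coneLift R1,
    cone_nonadj hna, cone_induce_colorable h0, cone_induce_colorable h1,
    cone_colorable (n + 1) hc, fun hcol => hn (cone_lower n hcol)⟩

lemma Good.myc {a b n : ℕ} (h : Good a b n) (hb : 1 ≤ b) : Good a (b + 1) (n + 1) := by
  obtain ⟨W, hW, G, R0, R1, hna, h0, h1, hc, hn⟩ := h
  letI := hW
  refine ⟨Option (W ⊕ W), inferInstance, StarAux.myc G, dodgeLift R0, payLift R1,
    myc_nonadj hna, dodge_induce_colorable h0, pay_induce_colorable hb h1,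
    myc_colorable (n + 1) hc, fun hcol => hn (myc_lower n hcol)⟩

lemma Good.iterCone {a b n : ℕ} (h : Good a b n) (m : ℕ) :
    Good (a + m) (b + m) (n + m) := by
  induction m with
  | zero => simpa using h
  | succ k ih => simpa [← Nat.add_assoc] using ih.cone

lemma Good.iterMyc {a b n : ℕ} (h : Good a b n) (hb : 1 ≤ b) (d : ℕ) :
    Good a (b + d) (n + d) := by
  induction d with
  | zero => simpa using h
  | succ k ih => simpa [← Nat.add_assoc] using ih.myc (by omega)

/-! ### Base graphs -/

/-- The 5-cycle. -/
def C5 : SimpleGraph (Fin 5) where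
  Adj i j := j = i + 1 ∨ i = j + 1
  symm := ⟨fun _ _ h => Or.symm h⟩
  loopless := by
    refine ⟨?_⟩
    intro i h
    have key : ∀ j : Fin 5, ¬ j = j + 1 := by decide
    rcases h with h | h <;> exact key i h

instance : DecidableRel C5.Adj := fun i j =>
  inferInstanceAs (Decidable (j = i + 1 ∨ i = j + 1))

lemma good_K2 : Good 1 1 1 := by
  refine ⟨Fin 2, inferInstance, ⊤, {0}, {0}, ?_, ?_, ?_, ?_, ?_⟩
  · intro x hx y hy
    rw [Set.mem_singleton_iff] at hx hy
    subst hx; subst hy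
    simp
  · refine ⟨Coloring.mk (fun _ => 0) ?_⟩
    intro v w hadj
    have hv : ¬ v.1 = 0 := fun h => v.2 (Set.mem_singleton_iff.mpr h)
    have hw : ¬ w.1 = 0 := fun h => w.2 (Set.mem_singleton_iff.mpr h)
    have key : ∀ u z : Fin 2, ¬ u = 0 → ¬ z = 0 → ¬ (⊤ : SimpleGraph (Fin 2)).Adj u z := by
      decide
    exact absurd (hadj : (⊤ : SimpleGraph (Fin 2)).Adj v.1 w.1) (key v.1 w.1 hv hw)
  · refine ⟨Coloring.mk (fun _ => 0) ?_⟩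
    intro v w hadj
    have hv : ¬ v.1 = 0 := fun h => v.2 (Set.mem_singleton_iff.mpr h)
    have hw : ¬ w.1 = 0 := fun h => w.2 (Set.mem_singleton_iff.mpr h)
    have key : ∀ u z : Fin 2, ¬ u = 0 → ¬ z = 0 → ¬ (⊤ : SimpleGraph (Fin 2)).Adj u z := by
      decide
    exact absurd (hadj : (⊤ : SimpleGraph (Fin 2)).Adj v.1 w.1) (key v.1 w.1 hv hw)
  · exact ⟨Coloring.mk id fun hadj => hadj.ne⟩
  · rintro ⟨C⟩
    exact C.valid (by decide : (⊤ : SimpleGraph (Fin 2)).Adj 0 1)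
      (Subsingleton.elim (C 0) (C 1))

lemma good_C5 : Good 1 2 2 := by
  refine ⟨Fin 5, inferInstance, C5, {0, 1, 3}, {3}, ?_, ?_, ?_, ?_, ?_⟩
  · intro x hx y hy
    rw [Set.mem_singleton_iff] at hy
    subst hy
    have hx' : x = 0 ∨ x = 1 ∨ x = 3 := by simpa using hx
    have key : ∀ x : Fin 5, x = 0 ∨ x = 1 ∨ x = 3 → ¬ C5.Adj x 3 := by decide
    exact key x hx'
  · refine ⟨Coloring.mk (fun _ => 0) ?_⟩
    intro v w hadj
    have hv : ¬ (v.1 = 0 ∨ v.1 = 1 ∨ v.1 = 3) := fun h => v.2 (by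
      rw [Set.mem_insert_iff, Set.mem_insert_iff, Set.mem_singleton_iff]; exact h)
    have hw : ¬ (w.1 = 0 ∨ w.1 = 1 ∨ w.1 = 3) := fun h => w.2 (by
      rw [Set.mem_insert_iff, Set.mem_insert_iff, Set.mem_singleton_iff]; exact h)
    have key : ∀ u z : Fin 5, ¬ (u = 0 ∨ u = 1 ∨ u = 3) → ¬ (z = 0 ∨ z = 1 ∨ z = 3) →
        ¬ C5.Adj u z := by decide
    exact absurd (hadj : C5.Adj v.1 w.1) (key v.1 w.1 hv hw)
  · refine ⟨Coloring.mk (fun v => (![0, 1, 0, 0, 1] : Fin 5 → Fin 2) v.1) ?_⟩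
    intro v w hadj
    have hv : ¬ v.1 = 3 := fun h => v.2 (Set.mem_singleton_iff.mpr h)
    have hw : ¬ w.1 = 3 := fun h => w.2 (Set.mem_singleton_iff.mpr h)
    have key : ∀ u z : Fin 5, ¬ u = 3 → ¬ z = 3 → C5.Adj u z →
        (![0, 1, 0, 0, 1] : Fin 5 → Fin 2) u ≠ (![0, 1, 0, 0, 1] : Fin 5 → Fin 2) z := by
      decide
    exact key v.1 w.1 hv hw (hadj : C5.Adj v.1 w.1)
  · refine ⟨Coloring.mk (fun v => (![0, 1, 0, 1, 2] : Fin 5 → Fin 3) v) ?_⟩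
    intro v w hadj
    have key : ∀ u z : Fin 5, C5.Adj u z →
        (![0, 1, 0, 1, 2] : Fin 5 → Fin 3) u ≠ (![0, 1, 0, 1, 2] : Fin 5 → Fin 3) z := by
      decide
    exact key v w hadj
  · rintro ⟨C⟩
    have h01 := C.valid (by decide : C5.Adj 0 1)
    have h12 := C.valid (by decide : C5.Adj 1 2)
    have h23 := C.valid (by decide : C5.Adj 2 3)
    have h34 := C.valid (by decide : C5.Adj 3 4)
    have h40 := C.valid (by decide : C5.Adj 4 0)
    have key : ∀ x y z : Fin 2, x ≠ y → y ≠ z → x = z := by decide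
    have e02 : C 0 = C 2 := key _ _ _ h01 h12
    have e24 : C 2 = C 4 := key _ _ _ h23 h34
    exact h40 ((e02.trans e24).symm)

/-! ### Extraction -/

lemma good_to_statement {Δ ℓ : ℕ} (hl : 1 ≤ ℓ) (h : Good (Δ - 1) (Δ - 1) (ℓ - 1)) :
    ∃ (V : Type) (_ : Fintype V) (H : SimpleGraph V),
      PropertyStar H Δ ∧ H.chromaticNumber = (ℓ : ℕ∞) := by
  obtain ⟨W, hW, G, R0, R1, hna, h0, h1, hc, hn⟩ := h
  refine ⟨W, hW, G, ⟨R0, R1, hna, h0, h1⟩, ?_⟩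
  have heq : (ℓ - 1) + 1 = ℓ := by omega
  rw [heq] at hc
  have hup : G.chromaticNumber ≤ (ℓ : ℕ∞) := hc.chromaticNumber_le
  refine le_antisymm hup ?_
  by_contra hcon
  push_neg at hcon
  have hne : G.chromaticNumber ≠ ⊤ := ne_top_of_lt hcon
  obtain ⟨k, hk⟩ := WithTop.ne_top_iff_exists.mp hne
  rw [← hk] at hcon
  have hkl : k < ℓ := Nat.cast_lt.mp hcon
  have hle : G.chromaticNumber ≤ ((ℓ - 1 : ℕ) : ℕ∞) := by
    rw [← hk]
    exact Nat.cast_le.mpr (Nat.le_sub_one_of_lt hkl)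
  exact hn (SimpleGraph.chromaticNumber_le_iff_colorable.mp hle)

end StarAux

/-- For every `Δ > 2` and `2 ≤ ℓ ≤ 2Δ - 2` there is a finite graph with property Δ-(*)
and chromatic number exactly `ℓ`. -/
theorem stmt_9 (Δ ℓ : ℕ) (hΔ : 2 < Δ) (hl2 : 2 ≤ ℓ) (hl : ℓ ≤ 2 * Δ - 2) :
    ∃ (V : Type) (_ : Fintype V) (H : SimpleGraph V),
      PropertyStar H Δ ∧ H.chromaticNumber = (ℓ : ℕ∞) := by
  apply StarAux.good_to_statement (by omega)
  rcases le_or_gt ℓ Δ with hcase | hcase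
  · -- complete-graph case: `K_2` plus `ℓ - 2` cones
    have g := StarAux.good_K2.iterCone (ℓ - 2)
    have e1 : 1 + (ℓ - 2) = ℓ - 1 := by omega
    rw [e1] at g
    exact g.mono (by omega) (by omega)
  · -- Mycielski case: `C5` plus `2Δ-2-ℓ` cones, then `ℓ-Δ-1` and `ℓ-Δ` Mycielski steps
    set m := 2 * Δ - 2 - ℓ with hm
    set e := ℓ - Δ with he
    have g1 := StarAux.good_C5.iterCone m
    -- Good (1+m) (2+m) (2+m)
    have g2 := g1.iterMyc (by omega) (e - 1)
    -- Good (1+m) (2+m+(e-1)) (2+m+(e-1))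
    have g3 := g2.swap.iterMyc (by omega) e
    -- Good (2+m+(e-1)) (1+m+e) (2+m+(e-1)+e)
    have g4 := g3.swap
    have ea : 2 + m + (e - 1) = Δ - 1 := by omega
    have eb : 1 + m + e = Δ - 1 := by omega
    have en : 2 + m + (e - 1) + e = ℓ - 1 := by omega
    rw [en, ea, eb] at g4
    exact g4
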